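/- Let X = (y, U, H) ∈ F₀ᴹ, i.e., X ∈ F₀ (so y_ξ + H_ξ = 1, y_ξ, H_ξ ≥ 0, y_ξ H_ξ = y_ξ²U² + U_ξ² a.e., H(-∞)=0) with ‖H‖_{L^∞} ≤ M. Then ‖U‖_{L^∞}² ≤ M. -/

import Mathlib

open MeasureTheory
open Filter Set Topology intervalIntegral

lemma lipschitz_deriv_bound {g : ℝ → ℝ} {K : NNReal} (hg : LipschitzWith K g) (x : ℝ) :
    |deriv g x| ≤ K := by
  by_cases hd : DifferentiableAt ℝ g x
  · have h1 : ‖fderiv ℝ g x‖ ≤ K :=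
      norm_fderiv_le_of_lipschitz ℝ hg
    have h2 : deriv g x = fderiv ℝ g x 1 := by rw [← toSpanSingleton_deriv]; simp
    calc |deriv g x| = ‖fderiv ℝ g x 1‖ := by rw [h2]; rfl
      _ ≤ ‖fderiv ℝ g x‖ * ‖(1:ℝ)‖ := (fderiv ℝ g x).le_opNorm 1
      _ ≤ K := by simpa using h1
  · simp [deriv_zero_of_not_differentiableAt hd]

lemma lipschitz_ftc {g : ℝ → ℝ} {K : NNReal} (hg : LipschitzWith K g) {a b : ℝ}
    (hab : a ≤ b) : g b - g a = ∫ x in a..b, deriv g x := by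
  have hc : Continuous g := hg.continuous
  set c : ℕ → ℝ := fun n => 1 / (n + 1) with hc_def
  have hcpos : ∀ n, 0 < c n := fun n => by positivity
  have hc0 : Tendsto c atTop (𝓝 0) := tendsto_one_div_add_atTop_nhds_zero_nat
  set F : ℕ → ℝ → ℝ := fun n x => (g (x + c n) - g x) / c n with hF_def
  -- pointwise a.e. convergence
  have hae : ∀ᵐ x : ℝ, Tendsto (fun n => F n x) atTop (𝓝 (deriv g x)) := by
    filter_upwards [hg.ae_differentiableAt (μ := volume)] with x hx
    have hd : HasDerivAt g (deriv g x) x := hx.hasDerivAt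
    have hslope := hasDerivAt_iff_tendsto_slope.mp hd
    have htx : Tendsto (fun n => x + c n) atTop (𝓝[≠] x) := by
      apply tendsto_nhdsWithin_of_tendsto_nhds_of_eventually_within
      · simpa using tendsto_const_nhds.add hc0
      · exact Eventually.of_forall fun n => by
          simp [mem_compl_singleton_iff, (hcpos n).ne']
    have := hslope.comp htx
    convert this using 2 with n
    simp only [Function.comp, slope_def_field, F]
    rw [div_eq_div_iff (hcpos n).ne' (by simpa using (hcpos n).ne')]
    ring
  -- uniform bound
  have hbd : ∀ n x, |F n x| ≤ K := by
    intro n x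
    rw [abs_div, abs_of_pos (hcpos n), div_le_iff₀ (hcpos n)]
    simpa [abs_of_pos (hcpos n), Real.dist_eq] using hg.dist_le_mul (x + c n) x
  -- dominated convergence
  have hA : Tendsto (fun n => ∫ x in a..b, F n x) atTop (𝓝 (∫ x in a..b, deriv g x)) := by
    apply intervalIntegral.tendsto_integral_filter_of_dominated_convergence (fun _ => (K : ℝ))
    · exact Eventually.of_forall fun n =>
        (((hc.comp (continuous_id.add continuous_const)).sub hc).div_const _).aestronglyMeasurable
    · exact Eventually.of_forall fun n => Eventually.of_forall fun x _ => by
        simpa [Real.norm_eq_abs] using hbd n x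
    · exact intervalIntegrable_const
    · filter_upwards [hae] with x hx _ using hx
  -- computation of the integrals
  have hint : ∀ u v : ℝ, IntervalIntegrable g volume u v := fun u v =>
    hc.intervalIntegrable u v
  have hval : ∀ n, ∫ x in a..b, F n x =
      ((∫ x in b..b + c n, g x) - ∫ x in a..a + c n, g x) / c n := by
    intro n
    have hia : IntervalIntegrable (fun x => g (x + c n)) volume a b := by
      simpa using (hint (a + c n) (b + c n)).comp_add_right (c n)
    have h1 : ∫ x in a..b, F n x = ((∫ x in a..b, g (x + c n)) - ∫ x in a..b, g x) / c n := by
      rw [← intervalIntegral.integral_sub hia (hint a b), ← intervalIntegral.integral_div]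
    rw [h1, intervalIntegral.integral_comp_add_right]
    congr 1
    have e1 : (∫ x in a + c n..b + c n, g x) + ∫ x in b + c n..b, g x = ∫ x in a + c n..b, g x :=
      intervalIntegral.integral_add_adjacent_intervals (hint _ _) (hint _ _)
    have e2 : (∫ x in a..a + c n, g x) + ∫ x in a + c n..b, g x = ∫ x in a..b, g x :=
      intervalIntegral.integral_add_adjacent_intervals (hint _ _) (hint _ _)
    have e3 : (∫ x in b + c n..b, g x) = - ∫ x in b..b + c n, g x :=
      intervalIntegral.integral_symm b (b + c n)
    linarith [e1, e2, e3]
  -- each endpoint term converges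
  have hend : ∀ (p : ℝ), Tendsto (fun n => (∫ x in p..p + c n, g x) / c n) atTop (𝓝 (g p)) := by
    intro p
    have key : ∀ n, |(∫ x in p..p + c n, g x) / c n - g p| ≤ K * c n := by
      intro n
      have h1 : ∀ x ∈ Set.uIoc p (p + c n), ‖g x - g p‖ ≤ (K : ℝ) * c n := by
        intro x hx
        rw [Set.uIoc_of_le (by linarith [hcpos n])] at hx
        have : |x - p| ≤ c n := by
          rw [abs_le]; constructor <;> [linarith [hx.1, hcpos n]; linarith [hx.2]]
        calc ‖g x - g p‖ = dist (g x) (g p) := by rw [Real.dist_eq, Real.norm_eq_abs]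
          _ ≤ K * dist x p := hg.dist_le_mul x p
          _ ≤ K * c n := by
              rw [Real.dist_eq]
              exact mul_le_mul_of_nonneg_left this K.coe_nonneg
      have h2 : ‖∫ x in p..p + c n, (g x - g p)‖ ≤ (K : ℝ) * c n * |p + c n - p| :=
        intervalIntegral.norm_integral_le_of_norm_le_const h1
      have h3 : (∫ x in p..p + c n, (g x - g p)) = (∫ x in p..p + c n, g x) - c n * g p := by
        rw [intervalIntegral.integral_sub (hint _ _) intervalIntegrable_const,
          intervalIntegral.integral_const, smul_eq_mul]
        ring
      rw [h3] at h2
      have h4 : (∫ x in p..p + c n, g x) / c n - g p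
          = ((∫ x in p..p + c n, g x) - c n * g p) / c n := by
        rw [sub_div, mul_comm, mul_div_assoc, div_self (hcpos n).ne', mul_one]
      rw [h4, abs_div, abs_of_pos (hcpos n), div_le_iff₀ (hcpos n)]
      calc |(∫ x in p..p + c n, g x) - c n * g p| ≤ (K : ℝ) * c n * |p + c n - p| := h2
        _ = K * c n * c n := by rw [show p + c n - p = c n by ring, abs_of_pos (hcpos n)]
    have hK0 : Tendsto (fun n => (K : ℝ) * c n) atTop (𝓝 ((K : ℝ) * 0)) :=
      hc0.const_mul _
    rw [mul_zero] at hK0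
    have hsq : Tendsto (fun n => (∫ x in p..p + c n, g x) / c n - g p) atTop (𝓝 0) :=
      squeeze_zero_norm (fun n => by rw [Real.norm_eq_abs]; exact key n) hK0
    have h5 := hsq.add (tendsto_const_nhds (x := g p) (f := atTop))
    simpa using h5
  have hB : Tendsto (fun n => ∫ x in a..b, F n x) atTop (𝓝 (g b - g a)) := by
    have h := (hend b).sub (hend a)
    apply h.congr
    intro n
    rw [hval n, sub_div]
  exact (tendsto_nhds_unique hB hA)

lemma U_bounded {U : ℝ → ℝ} {K : NNReal} (hU : LipschitzWith K U)
    (hUsq : Integrable (fun x => U x ^ 2) volume) (x₀ : ℝ) :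
    |U x₀| ≤ max 1 (8 * ((K : ℝ) + 1) * ∫ x, U x ^ 2) := by
  set I := ∫ x, U x ^ 2 with hIdef
  have hI0 : 0 ≤ I := integral_nonneg fun x => sq_nonneg _
  set c := |U x₀| with hcdef
  have hc0 : 0 ≤ c := abs_nonneg _
  set δ := c / (2 * ((K : ℝ) + 1)) with hδdef
  have hδ0 : 0 ≤ δ := by positivity
  have hlow : ∀ t ∈ Icc x₀ (x₀ + δ), c ^ 2 / 4 ≤ U t ^ 2 := by
    intro t ht
    have h1 : |U x₀ - U t| ≤ (K : ℝ) * δ := by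
      have := hU.dist_le_mul x₀ t
      rw [Real.dist_eq, Real.dist_eq] at this
      refine this.trans (mul_le_mul_of_nonneg_left ?_ K.coe_nonneg)
      rw [abs_le]; constructor <;> [linarith [ht.2]; linarith [ht.1]]
    have h2 : c / 2 ≤ |U t| := by
      have h3 : (K : ℝ) * δ ≤ ((K : ℝ) + 1) * δ := by
        apply mul_le_mul_of_nonneg_right (by linarith) hδ0
      have h4 : ((K : ℝ) + 1) * δ = c / 2 := by
        rw [hδdef]; field_simp
      have h5 : c - |U t| ≤ |U x₀ - U t| := by
        have := abs_sub_abs_le_abs_sub (U x₀) (U t)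
        linarith [this]
      linarith
    calc c ^ 2 / 4 = (c / 2) ^ 2 := by ring
      _ ≤ |U t| ^ 2 := by
          apply sq_le_sq' <;> [linarith [abs_nonneg (U t)]; exact h2]
      _ = U t ^ 2 := sq_abs _
  have hvol : (volume (Icc x₀ (x₀ + δ))).toReal = δ := by
    rw [Real.volume_Icc]
    simp [hδ0]
  have hlb : c ^ 2 / 4 * δ ≤ ∫ t in Icc x₀ (x₀ + δ), U t ^ 2 := by
    have := setIntegral_ge_of_const_le (μ := volume) measurableSet_Icc
      (by rw [Real.volume_Icc]; exact ENNReal.ofReal_ne_top) hlow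
      (hUsq.integrableOn)
    rw [measureReal_def, hvol, smul_eq_mul] at this; linarith
  have hub : ∫ t in Icc x₀ (x₀ + δ), U t ^ 2 ≤ I :=
    setIntegral_le_integral hUsq (ae_of_all _ fun x => sq_nonneg _)
  have hkey : c ^ 3 ≤ 8 * ((K : ℝ) + 1) * I := by
    have h2 : c ^ 2 / 4 * δ ≤ I := hlb.trans hub
    have h3 := mul_le_mul_of_nonneg_left h2 (show (0:ℝ) ≤ 8 * ((K : ℝ) + 1) by positivity)
    calc c ^ 3 = 8 * ((K : ℝ) + 1) * (c ^ 2 / 4 * δ) := by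
          rw [hδdef]; field_simp; ring
      _ ≤ 8 * ((K : ℝ) + 1) * I := h3
  rcases le_or_gt c 1 with hc1 | hc1
  · exact le_max_of_le_left hc1
  · refine le_max_of_le_right ?_
    nlinarith [hkey, hc1]

/-- `(y,U,H) ∈ F₀` (see the paper): Lagrangian coordinates in `E = V × H¹ × V`
with `y_ξ, H_ξ ≥ 0`, `y_ξ + H_ξ = 1` a.e., the compatibility relation
`y_ξ H_ξ = y_ξ² U² + U_ξ²` a.e., and `H(-∞) = 0`. -/
def InF0 (y U H : ℝ → ℝ) : Prop :=
  (∃ K : NNReal, LipschitzWith K y) ∧ (∃ K : NNReal, LipschitzWith K U) ∧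
  (∃ K : NNReal, LipschitzWith K H) ∧
  (∃ C : ℝ, ∀ x, |y x - x| ≤ C) ∧ (∃ C : ℝ, ∀ x, |H x| ≤ C) ∧
  MemLp (fun x => deriv y x - 1) 2 (volume : Measure ℝ) ∧
  MemLp (deriv H) 2 (volume : Measure ℝ) ∧
  MemLp U 2 (volume : Measure ℝ) ∧
  MemLp (deriv U) 2 (volume : Measure ℝ) ∧
  (∀ᵐ ξ ∂(volume : Measure ℝ),
    0 ≤ deriv y ξ ∧ 0 ≤ deriv H ξ ∧ deriv y ξ + deriv H ξ = 1 ∧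
    deriv y ξ * deriv H ξ = (deriv y ξ) ^ 2 * (U ξ) ^ 2 + (deriv U ξ) ^ 2) ∧
  Filter.Tendsto H Filter.atBot (nhds 0)

/-- For `X = (y,U,H) ∈ F₀ᴹ`, i.e. `X ∈ F₀` with `‖H‖_{L^∞} ≤ M`, one has
`‖U‖_{L^∞}² ≤ M`. -/
theorem stmt8 (M : ℝ) (y U H : ℝ → ℝ) (h : InF0 y U H)
    (hM : ∀ ξ, |H ξ| ≤ M) :
    ∀ ξ, (U ξ) ^ 2 ≤ M := by
  obtain ⟨-, ⟨KU, hU⟩, ⟨KH, hH⟩, -, -, -, -, hUL2, -, hae, hHbot⟩ := h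
  have hUsqInt : Integrable (fun x => U x ^ 2) volume := hUL2.integrable_sq
  set C : ℝ := max 1 (8 * ((KU : ℝ) + 1) * ∫ x, U x ^ 2) with hCdef
  have hC1 : (1 : ℝ) ≤ C := le_max_left _ _
  have hUbd : ∀ x, |U x| ≤ C := fun x => U_bounded hU hUsqInt x
  -- U² is Lipschitz
  set K2 : NNReal := ⟨2 * C * KU, by positivity⟩ with hK2def
  have hUsqLip : LipschitzWith K2 (fun x => U x ^ 2) := by
    apply LipschitzWith.of_dist_le_mul
    intro a b
    rw [Real.dist_eq, Real.dist_eq]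
    have h1 : |U a ^ 2 - U b ^ 2| = |U a + U b| * |U a - U b| := by
      rw [← abs_mul]; congr 1; ring
    have h2 : |U a + U b| ≤ 2 * C :=
      (abs_add_le _ _).trans (by linarith [hUbd a, hUbd b])
    have h3 : |U a - U b| ≤ (KU : ℝ) * |a - b| := by
      have := hU.dist_le_mul a b
      rwa [Real.dist_eq, Real.dist_eq] at this
    have h4 : (K2 : ℝ) = 2 * C * KU := rfl
    rw [h1, h4]
    calc |U a + U b| * |U a - U b| ≤ (2 * C) * ((KU : ℝ) * |a - b|) :=
          mul_le_mul h2 h3 (abs_nonneg _) (by positivity)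
      _ = 2 * C * KU * |a - b| := by ring
  -- a.e. inequality between derivatives
  have haeineq : ∀ᵐ x : ℝ, deriv (fun t => U t ^ 2) x ≤ deriv H x := by
    filter_upwards [hae, hU.ae_differentiableAt (μ := volume)] with x hx hdx
    obtain ⟨h1, h2, -, h4⟩ := hx
    have hdU : HasDerivAt U (deriv U x) x := hdx.hasDerivAt
    have hUsq' : deriv (fun t => U t ^ 2) x = 2 * U x * deriv U x := by
      have := (hdU.pow 2).deriv
      show deriv (U ^ 2) x = _
      simpa [mul_comm] using this
    rw [hUsq']
    rcases h1.eq_or_lt with hy0 | hy0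
    · have hv : deriv U x = 0 := by nlinarith [sq_nonneg (deriv U x), sq_nonneg (U x)]
      rw [hv, mul_zero]; exact h2
    · have h5 : 0 ≤ deriv y x * (deriv H x - 2 * U x * deriv U x) := by
        nlinarith [sq_nonneg (deriv y x * U x - deriv U x)]
      by_contra hlt
      push_neg at hlt
      nlinarith [mul_pos hy0 (show (0:ℝ) < 2 * U x * deriv U x - deriv H x by linarith)]
  -- interval integrability of the derivatives
  have hintD : ∀ (g : ℝ → ℝ) (K : NNReal), LipschitzWith K g → ∀ a b : ℝ,
      IntervalIntegrable (deriv g) volume a b := by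
    intro g K hg a b
    rw [intervalIntegrable_iff]
    exact (integrableOn_const (C := (K:ℝ)) measure_Ioc_lt_top.ne).mono'
      (measurable_deriv g).aestronglyMeasurable
      (ae_of_all _ fun x => by
        rw [Real.norm_eq_abs]; exact lipschitz_deriv_bound hg x)
  -- main monotonicity estimate
  have hmain : ∀ a b : ℝ, a ≤ b → U b ^ 2 - U a ^ 2 ≤ H b - H a := by
    intro a b hab
    rw [lipschitz_ftc hUsqLip hab, lipschitz_ftc hH hab]
    exact intervalIntegral.integral_mono_ae hab
      (hintD _ _ hUsqLip a b) (hintD _ _ hH a b) haeineq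
  -- smallness of U² near -∞
  have hsmall : ∀ ε > (0:ℝ), ∀ b : ℝ, ∃ a ≤ b, U a ^ 2 < ε := by
    intro ε hε b
    by_contra hcon
    push_neg at hcon
    have hconst : Integrable (fun _ : ℝ => ε) (volume.restrict (Iic b)) := by
      apply (hUsqInt.restrict (s := Iic b)).mono' aestronglyMeasurable_const
      filter_upwards [ae_restrict_mem measurableSet_Iic] with x hx
      rw [Real.norm_eq_abs, abs_of_pos hε]
      exact hcon x hx
    rw [integrable_const_iff] at hconst
    rcases hconst with h0 | hfin
    · exact hε.ne' h0
    · have hfin := measure_lt_top (volume.restrict (Iic b)) univ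
      rw [Measure.restrict_apply_univ, Real.volume_Iic] at hfin
      exact (lt_irrefl _ hfin).elim
  -- conclusion
  intro ξ
  refine le_of_forall_pos_le_add fun ε hε => ?_
  have hhalf : (0:ℝ) < ε / 2 := by linarith
  obtain ⟨b₀, hb₀⟩ := (Filter.eventually_atBot).mp
    (Metric.tendsto_nhds.mp hHbot (ε / 2) hhalf)
  obtain ⟨a, ha, haU⟩ := hsmall (ε / 2) hhalf (min b₀ ξ)
  have h1 : U ξ ^ 2 - U a ^ 2 ≤ H ξ - H a :=
    hmain a ξ (ha.trans (min_le_right _ _))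
  have h2 : |H a| < ε / 2 := by
    have := hb₀ a (ha.trans (min_le_left _ _))
    rwa [Real.dist_eq, sub_zero] at this
  have h3 : H ξ ≤ M := (abs_le.mp (hM ξ)).2
  have h4 : -(ε / 2) < H a := by linarith [(abs_lt.mp h2).1]
  linarith
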